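/- Let G be a graph on at least two vertices, and let v be a simplicial vertex of G. Then ω(G) = max{|N_G[v]|, ω(G ∖ v)} and χ(G) = max{ω(G), χ(G ∖ v)}, where G ∖ v denotes the induced subgraph of G obtained by deleting v. -/

import Mathlib

open SimpleGraph

/-- The closed neighborhood `N_G[v]` of a vertex `v`. -/
def closedNbhd {V : Type} (G : SimpleGraph V) (v : V) : Set V :=
  insert v (G.neighborSet v)

/-- `X` (indexed cyclically by `ZMod k`) is a ring partition of `G`:
a partition into `k` nonempty sets, each of which can be ordered so that the
closed neighborhoods are nested, with the last one covering `X i` and the first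
one being exactly `X (i-1) ∪ X i ∪ X (i+1)`. -/
def IsRingPartition {V : Type} (G : SimpleGraph V) (k : ℕ) (X : ZMod k → Set V) : Prop :=
  (∀ i, (X i).Nonempty) ∧
  (∀ v : V, ∃! i, v ∈ X i) ∧
  ∀ i, ∃ (m : ℕ) (hm : 0 < m) (u : Fin m → V),
    Function.Injective u ∧
    Set.range u = X i ∧
    (∀ j j' : Fin m, j ≤ j' → closedNbhd G (u j') ⊆ closedNbhd G (u j)) ∧
    X i ⊆ closedNbhd G (u ⟨m - 1, by omega⟩) ∧
    closedNbhd G (u ⟨0, hm⟩) = X (i - 1) ∪ X i ∪ X (i + 1)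

/-- `G` is a `k`-ring. -/
def IsRing {V : Type} (G : SimpleGraph V) (k : ℕ) : Prop :=
  ∃ X : ZMod k → Set V, IsRingPartition G k X

/-- `X` is a hyperhole partition of `G`: a partition into `k` nonempty cliques,
each complete to the two neighboring cliques and anticomplete to all remaining
vertices. -/
def IsHyperholePartition {V : Type} (G : SimpleGraph V) (k : ℕ) (X : ZMod k → Set V) : Prop :=
  (∀ i, (X i).Nonempty) ∧
  (∀ v : V, ∃! i, v ∈ X i) ∧
  (∀ i, G.IsClique (X i)) ∧
  (∀ i, ∀ x ∈ X i, ∀ y ∈ X (i - 1) ∪ X (i + 1), G.Adj x y) ∧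
  (∀ i, ∀ x ∈ X i, ∀ y, y ∉ X (i - 1) ∪ X i ∪ X (i + 1) → ¬ G.Adj x y)

/-- `G` is a `k`-hyperhole. -/
def IsHyperhole {V : Type} (G : SimpleGraph V) (k : ℕ) : Prop :=
  ∃ X : ZMod k → Set V, IsHyperholePartition G k X

/-- `X` is a hyperantihole partition of `G`: a partition into `k` nonempty cliques,
each complete to all vertices outside the two neighboring cliques (and itself),
and anticomplete to the two neighboring cliques. -/
def IsHyperantiholePartition {V : Type} (G : SimpleGraph V) (k : ℕ) (X : ZMod k → Set V) : Prop :=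
  (∀ i, (X i).Nonempty) ∧
  (∀ v : V, ∃! i, v ∈ X i) ∧
  (∀ i, G.IsClique (X i)) ∧
  (∀ i, ∀ x ∈ X i, ∀ y, y ∉ X (i - 1) ∪ X i ∪ X (i + 1) → G.Adj x y) ∧
  (∀ i, ∀ x ∈ X i, ∀ y ∈ X (i - 1) ∪ X (i + 1), ¬ G.Adj x y)

/-- `G` is a `k`-hyperantihole. -/
def IsHyperantihole {V : Type} (G : SimpleGraph V) (k : ℕ) : Prop :=
  ∃ X : ZMod k → Set V, IsHyperantiholePartition G k X

/-- A vertex is simplicial if its neighborhood is a clique. -/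
def IsSimplicial {V : Type} (G : SimpleGraph V) (v : V) : Prop :=
  G.IsClique (G.neighborSet v)

/-- A graph is perfect if every induced subgraph has chromatic number equal to
its clique number. -/
def IsPerfect {V : Type} (G : SimpleGraph V) : Prop :=
  ∀ S : Set V, (G.induce S).chromaticNumber = ((G.induce S).cliqueNum : ℕ∞)

/-- The function `f_k`: `⌊kn/(k-1)⌋` if `n ≡ 0, 1 (mod k-1)`, and `⌈kn/(k-1)⌉`
otherwise. -/
def ringF (k n : ℕ) : ℕ :=
  if n % (k - 1) ≤ 1 then k * n / (k - 1) else (k * n + (k - 2)) / (k - 1)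

/-- The function `g_k`: `⌊kn/(k-1)⌋` if `n mod (k-1) ∈ {0, …, (k-3)/2}`, and
`⌈kn/(k-1)⌉` if `n mod (k-1) ∈ {(k-1)/2, …, k-2}`. -/
def ringG (k n : ℕ) : ℕ :=
  if n % (k - 1) ≤ (k - 3) / 2 then k * n / (k - 1) else (k * n + (k - 2)) / (k - 1)

/-- The function `f_T`: `⌊5n/4⌋` if `n ≡ 0, 1 (mod 4)`, and `⌈5n/4⌉` if
`n ≡ 2, 3 (mod 4)`. -/
def fT (n : ℕ) : ℕ :=
  if n % 4 ≤ 1 then 5 * n / 4 else (5 * n + 3) / 4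

/-- `G` contains the complete graph `K_m` as a minor, witnessed by `m` pairwise
disjoint nonempty branch sets, each inducing a connected subgraph, with an edge
between every two of them. -/
def HasCompleteMinor {V : Type} (G : SimpleGraph V) (m : ℕ) : Prop :=
  ∃ S : Fin m → Set V,
    (∀ i, (S i).Nonempty) ∧
    (∀ i j, i ≠ j → Disjoint (S i) (S j)) ∧
    (∀ i, (G.induce (S i)).Connected) ∧
    (∀ i j, i ≠ j → ∃ x ∈ S i, ∃ y ∈ S j, G.Adj x y)

/-- If `G` has at least two vertices and `v` is a simplicial vertex of `G`, then
`ω(G) = max {|N_G[v]|, ω(G \ v)}` and `χ(G) = max {ω(G), χ(G \ v)}`. -/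
theorem simplicial_cliqueNum_chromaticNumber {V : Type} [Fintype V]
    (G : SimpleGraph V) (h2 : 2 ≤ Fintype.card V)
    (v : V) (hv : IsSimplicial G v) :
    G.cliqueNum = max (closedNbhd G v).ncard (G.induce {v}ᶜ).cliqueNum ∧
    G.chromaticNumber = max (G.cliqueNum : ℕ∞) (G.induce {v}ᶜ).chromaticNumber := by
  classical
  set S : Set V := {v}ᶜ with hS
  haveI : Fintype ↥S := Fintype.ofFinite _
  set H := G.induce S with hH
  have hfin : (closedNbhd G v).Finite := Set.toFinite _
  have hvnot : v ∉ G.neighborSet v := by simp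
  -- closed neighborhood is a clique
  have hcl : G.IsClique (closedNbhd G v) := by
    refine hv.insert ?_
    intro b hb _
    exact (G.mem_neighborSet v b).mp hb
  have hNcard : (closedNbhd G v).ncard = hfin.toFinset.card :=
    Set.ncard_eq_toFinset_card _ hfin
  -- |N[v]| ≤ ω(G)
  have hNle : (closedNbhd G v).ncard ≤ G.cliqueNum := by
    rw [hNcard]
    exact IsClique.card_le_cliqueNum (tc := by simpa [hfin.coe_toFinset] using hcl)
  -- ω(H) ≤ ω(G)
  have hHle : H.cliqueNum ≤ G.cliqueNum := by
    obtain ⟨t, ht⟩ := H.exists_isNClique_cliqueNum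
    rw [← ht.2]
    have hclG : G.IsClique ↑(t.map ⟨Subtype.val, Subtype.val_injective⟩) := by
      intro a ha b hb hab
      simp only [Finset.coe_map, Set.mem_image, Finset.mem_coe] at ha hb
      obtain ⟨a', ha', rfl⟩ := ha
      obtain ⟨b', hb', rfl⟩ := hb
      exact ht.1 ha' hb' (fun h => hab (congrArg Subtype.val h))
    have := IsClique.card_le_cliqueNum (tc := hclG)
    simpa using this
  -- ω(G) ≤ max
  have hmax1 : G.cliqueNum = max (closedNbhd G v).ncard H.cliqueNum := by
    refine le_antisymm ?_ (max_le hNle hHle)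
    obtain ⟨s, hs⟩ := G.exists_isNClique_cliqueNum
    rw [← hs.2]
    by_cases hvs : v ∈ s
    · refine le_max_of_le_left ?_
      have hsub : (↑s : Set V) ⊆ closedNbhd G v := by
        intro x hx
        rcases eq_or_ne x v with rfl | hxv
        · exact Set.mem_insert _ _
        · exact Set.mem_insert_of_mem _ (hs.1 (Finset.mem_coe.mpr hvs) hx (Ne.symm hxv))
      calc s.card = (↑s : Set V).ncard := (Set.ncard_coe_finset s).symm
        _ ≤ (closedNbhd G v).ncard := Set.ncard_le_ncard hsub hfin
    · refine le_max_of_le_right ?_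
      have hf : ∀ x ∈ s, x ∈ S := by
        intro x hx
        simp only [hS, Set.mem_compl_iff, Set.mem_singleton_iff]
        rintro rfl; exact hvs hx
      let t : Finset ↥S := s.attach.map
        ⟨fun x => ⟨x.1, hf x.1 x.2⟩, fun a b h => by
          have h' := congrArg Subtype.val h; exact Subtype.ext h'⟩
      have htc : H.IsClique ↑t := by
        intro a ha b hb hab
        simp only [t, Finset.coe_map, Set.mem_image, Finset.mem_coe, Finset.mem_attach,
          Function.Embedding.coeFn_mk, true_and] at ha hb
        obtain ⟨a', rfl⟩ := ha
        obtain ⟨b', rfl⟩ := hb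
        have : G.Adj a'.1 b'.1 := hs.1 a'.2 b'.2 (fun h => hab (by simp [Subtype.ext h]))
        exact this
      have := IsClique.card_le_cliqueNum (tc := htc)
      simpa [t] using this
  refine ⟨hmax1, ?_⟩
  -- χ(H) is finite
  have hHcol : H.Colorable (ENat.toNat H.chromaticNumber) :=
    H.colorable_chromaticNumber_of_fintype
  have hHne : H.chromaticNumber ≠ ⊤ :=
    chromaticNumber_ne_top_iff_exists.mpr ⟨_, hHcol⟩
  set n : ℕ := max G.cliqueNum (ENat.toNat H.chromaticNumber) with hn
  -- lower bounds
  have hω : (G.cliqueNum : ℕ∞) ≤ G.chromaticNumber := by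
    obtain ⟨s, hs⟩ := G.exists_isNClique_cliqueNum
    rw [← hs.2]
    exact hs.1.card_le_chromaticNumber
  have hHχ : H.chromaticNumber ≤ G.chromaticNumber :=
    chromaticNumber_mono_of_hom
      (Embedding.comap (Function.Embedding.subtype fun x => x ∈ S) G).toHom
  refine le_antisymm ?_ (max_le hω hHχ)
  -- build a coloring of G with n colors
  have hn1 : 1 ≤ G.cliqueNum := by
    have h1 : 1 ≤ (closedNbhd G v).ncard := by
      rw [hNcard]
      exact Finset.card_pos.mpr ⟨v, hfin.mem_toFinset.mpr (Set.mem_insert v _)⟩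
    exact le_trans h1 hNle
  have hdegN : (closedNbhd G v).ncard = G.degree v + 1 := by
    rw [closedNbhd, Set.ncard_insert_of_notMem hvnot (Set.toFinite _)]
    rw [← G.card_neighborFinset_eq_degree, neighborFinset_def, ← Set.ncard_eq_toFinset_card']
  have hdeg : G.degree v + 1 ≤ n := le_trans (hdegN ▸ hNle) (le_max_left _ _)
  obtain ⟨C⟩ := hHcol.mono (le_max_right _ _)
  have hmem : ∀ u : V, G.Adj v u → u ∈ S := fun u hu => by
    simp only [hS, Set.mem_compl_iff, Set.mem_singleton_iff]
    exact fun h => (G.ne_of_adj hu) h.symm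
  set used : Finset (Fin n) := (G.neighborFinset v).attach.image
    (fun u => C ⟨u.1, hmem u.1 ((G.mem_neighborFinset v u.1).mp u.2)⟩) with hused
  have husedcard : used.card < n := by
    have h1 : used.card ≤ (G.neighborFinset v).attach.card := Finset.card_image_le
    rw [Finset.card_attach, G.card_neighborFinset_eq_degree] at h1
    omega
  obtain ⟨c, hc⟩ : ∃ c : Fin n, c ∉ used := by
    by_contra h
    push_neg at h
    have h1 : (Finset.univ : Finset (Fin n)).card ≤ used.card :=
      Finset.card_le_card (fun x _ => h x)
    rw [Finset.card_univ, Fintype.card_fin] at h1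
    omega
  have hcolG : G.Colorable n := by
    refine ⟨Coloring.mk (fun x => if h : x = v then c else C ⟨x, by simp [hS, h]⟩) ?_⟩
    intro a b hab
    split_ifs with ha hb hb
    · subst ha; subst hb; exact absurd hab (G.irrefl)
    · have hab' : G.Adj v b := ha ▸ hab
      intro hEq
      apply hc
      rw [hEq, hused]
      exact Finset.mem_image.mpr ⟨⟨b, (G.mem_neighborFinset v b).mpr hab'⟩,
        Finset.mem_attach _ _, rfl⟩
    · have hab' : G.Adj v a := (hb ▸ hab).symm
      intro hEq
      apply hc
      rw [← hEq, hused]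
      exact Finset.mem_image.mpr ⟨⟨a, (G.mem_neighborFinset v a).mpr hab'⟩,
        Finset.mem_attach _ _, rfl⟩
    · exact C.valid (show H.Adj ⟨a, by simp [hS, ha]⟩ ⟨b, by simp [hS, hb]⟩ from hab)
  refine le_trans hcolG.chromaticNumber_le ?_
  rw [hn]
  rcases le_total G.cliqueNum (ENat.toNat H.chromaticNumber) with h | h
  · rw [max_eq_right h, ENat.coe_toNat hHne]; exact le_max_right _ _
  · rw [max_eq_left h]; exact le_max_left _ _
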